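/- arXiv:0810.3381 — 3 statements merged into one kernel-verified Lean document; each statement's English description precedes it below -/
import Mathlib

section
/- Let d ≥ 1 and let (u_i)_{i=1}^{d²} be a SIC system on ℂ^d. Then the d² vectors u_i ⊗ ū_i in ℂ^d ⊗ ℂ^d are linearly independent (hence form a basis of ℂ^d ⊗ ℂ^d). -/
open scoped BigOperators ComplexInnerProductSpace
open Matrix MeasureTheory

noncomputable section

/-- `ℂ^d` with the standard Hermitian inner product. -/
abbrev V (d : ℕ) : Type := EuclideanSpace ℂ (Fin d)

/-- `ℂ^d ⊗ ℂ^d`, identified with functions on `Fin d × Fin d`. -/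
abbrev V2 (d : ℕ) : Type := EuclideanSpace ℂ (Fin d × Fin d)

/-- operators on `ℂ^d ⊗ ℂ^d`, as matrices. -/
abbrev Op2 (d : ℕ) : Type := Matrix (Fin d × Fin d) (Fin d × Fin d) ℂ

/-- tensor (Kronecker) product of vectors. -/
def tens {d : ℕ} (u v : V d) : V2 d := WithLp.toLp 2 (fun p : Fin d × Fin d => u p.1 * v p.2)

/-- entrywise complex conjugate `ū` of a vector. -/
def cvec {d : ℕ} (u : V d) : V d := WithLp.toLp 2 (fun k => starRingEnd ℂ (u k))

/-- the maximally entangled state `φ⁰ = (1/√d) Σ_k e_k ⊗ e_k`. -/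
def phi0 (d : ℕ) : V2 d := WithLp.toLp 2 (fun p : Fin d × Fin d => if p.1 = p.2 then ((Real.sqrt d : ℂ))⁻¹ else 0)

/-- the rank-one operator `|w⟩⟨w|`. -/
def outer {d : ℕ} (w : V2 d) : Op2 d := Matrix.of fun p q => w p * starRingEnd ℂ (w q)

/-- `T_inv = |φ⁰⟩⟨φ⁰| + (1/(d+1))(I - |φ⁰⟩⟨φ⁰|)`. -/
def Tinv (d : ℕ) : Op2 d := outer (phi0 d) + (1 / ((d : ℂ) + 1)) • (1 - outer (phi0 d))


/-- A SIC system on `ℂ^d`: `d²` unit vectors with `|⟨u_i, u_j⟩|² = 1/(d+1)` for `i ≠ j`. -/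
def IsSIC {d : ℕ} (u : Fin (d ^ 2) → V d) : Prop :=
  (∀ i, ‖u i‖ = 1) ∧ ∀ i j, i ≠ j → ‖⟪u i, u j⟫‖ ^ 2 = 1 / (d + 1)

lemma inner_tens {d : ℕ} (a b : V d) :
    ⟪tens a (cvec a), tens b (cvec b)⟫ = ⟪a, b⟫ * starRingEnd ℂ ⟪a, b⟫ := by
  have h1 : ⟪tens a (cvec a), tens b (cvec b)⟫
      = ∑ k : Fin d, ∑ l : Fin d, (starRingEnd ℂ (a k) * b k) * (a l * starRingEnd ℂ (b l)) := by
    simp only [PiLp.inner_apply, RCLike.inner_apply, tens, cvec, WithLp.ofLp_toLp, _root_.map_mul, Complex.conj_conj,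
      Fintype.sum_prod_type]
    exact Finset.sum_congr rfl fun k _ => Finset.sum_congr rfl fun l _ => by ring
  rw [h1, ← Finset.sum_mul_sum]
  simp [PiLp.inner_apply, RCLike.inner_apply, map_sum]
  congr 1 <;> exact Finset.sum_congr rfl fun _ _ => mul_comm _ _


/-- For a SIC system, the vectors `u_i ⊗ ū_i` are linearly independent
(hence, being `d²` of them, form a basis of `ℂ^d ⊗ ℂ^d`). -/
theorem stmt1 (d : ℕ) (hd : 1 ≤ d) (u : Fin (d ^ 2) → V d) (hu : IsSIC u) :
    LinearIndependent ℂ (fun i => tens (u i) (cvec (u i))) := by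
  set w : Fin (d ^ 2) → V2 d := fun i => tens (u i) (cvec (u i)) with hw
  have hne : ((d : ℂ) + 1) ≠ 0 := by
    exact_mod_cast (Nat.cast_add_one_ne_zero d : ((d:ℂ) + 1) ≠ 0)
  have hd0 : (d : ℂ) ≠ 0 := Nat.cast_ne_zero.mpr (by omega)
  set t : ℂ := ((d : ℂ) + 1)⁻¹ with ht
  have hG : ∀ j i, ⟪w j, w i⟫ = if i = j then 1 else t := by
    intro j i
    rw [inner_tens]
    by_cases hij : i = j
    · subst hij
      rw [if_pos rfl, inner_self_eq_norm_sq_to_K, hu.1 i]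
      norm_num
    · rw [if_neg hij, Complex.mul_conj, ← Complex.sq_norm,
        hu.2 j i (fun h => hij h.symm)]
      push_cast
      rw [one_div]
  rw [Fintype.linearIndependent_iff]
  intro c hc
  have h3 : ∀ j, (∑ i, c i) * t + c j * (1 - t) = 0 := by
    intro j
    have h1 : ⟪w j, (0 : V2 d)⟫ = 0 := inner_zero_right _
    rw [← hc, inner_sum] at h1
    simp only [inner_smul_right, hG] at h1
    calc (∑ i, c i) * t + c j * (1 - t)
        = ∑ i, c i * (if i = j then 1 else t) := by
          rw [show (∑ i, c i * (if i = j then 1 else t))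
              = ∑ i, (c i * t + if i = j then c i * (1 - t) else 0) from
            Finset.sum_congr rfl fun i _ => by split <;> ring]
          rw [Finset.sum_add_distrib, Finset.sum_ite_eq' Finset.univ j, ← Finset.sum_mul]
          simp
      _ = 0 := h1
  have hS : (∑ i, c i) = 0 := by
    have hsum : ∑ j : Fin (d ^ 2), ((∑ i, c i) * t + c j * (1 - t)) = 0 := by
      simp [h3]
    rw [Finset.sum_add_distrib, Finset.sum_const, ← Finset.sum_mul] at hsum
    simp only [Finset.card_univ, Fintype.card_fin, nsmul_eq_mul] at hsum
    have key : ((d ^ 2 : ℕ) : ℂ) * ((∑ i, c i) * t) + (∑ i, c i) * (1 - t)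
        = (∑ i, c i) * (d : ℂ) := by
      rw [ht]
      push_cast
      field_simp
      ring
    rw [key] at hsum
    exact (mul_eq_zero.mp hsum).resolve_right hd0
  intro j
  have := h3 j
  rw [hS, zero_mul, zero_add] at this
  have h1t : (1 : ℂ) - t ≠ 0 := by
    rw [ht]
    have : (1 : ℂ) - ((d : ℂ) + 1)⁻¹ = (d : ℂ) * ((d : ℂ) + 1)⁻¹ := by
      field_simp
      ring
    rw [this]
    exact mul_ne_zero hd0 (inv_ne_zero hne)
  exact (mul_eq_zero.mp this).resolve_right h1t
end
end

section
/- Let d ≥ 1, let I be a finite index set, and for each i ∈ I let p_i > 0 be a real number and u_i ∈ ℂ^d a unit vector. If Σ_{i∈I} p_i·|u_i ⊗ ū_i⟩⟨u_i ⊗ ū_i| = T_inv, then the cardinality of I is at least d². -/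
open scoped BigOperators ComplexInnerProductSpace
open Matrix MeasureTheory

noncomputable section

lemma outer_idem (d : ℕ) (hd : 1 ≤ d) :
    outer (phi0 d) * outer (phi0 d) = outer (phi0 d) := by
  have hd0 : (d : ℝ) ≠ 0 := by positivity
  have hsum : ∑ r : Fin d × Fin d, phi0 d r * starRingEnd ℂ (phi0 d r) = 1 := by
    rw [Fintype.sum_prod_type]
    have : ∀ k : Fin d, ∑ l : Fin d,
        phi0 d (k, l) * starRingEnd ℂ (phi0 d (k, l)) = (d : ℂ)⁻¹ := by
      intro k
      simp only [phi0, PiLp.toLp_apply]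
      rw [Finset.sum_eq_single k]
      · simp only [if_true, map_inv₀, Complex.conj_ofReal]
        rw [← mul_inv, ← Complex.ofReal_mul, Real.mul_self_sqrt (Nat.cast_nonneg d)]
        norm_num
      · intro b _ hb
        simp [hb.symm]
      · simp
    simp only [this, Finset.sum_const, Finset.card_univ, Fintype.card_fin, nsmul_eq_mul]
    rw [mul_inv_cancel₀ (by exact_mod_cast hd0)]
  ext p q
  simp only [outer, Matrix.mul_apply, Matrix.of_apply]
  calc ∑ r, phi0 d p * starRingEnd ℂ (phi0 d r) * (phi0 d r * starRingEnd ℂ (phi0 d q))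
      = (phi0 d p * starRingEnd ℂ (phi0 d q)) *
        ∑ r, phi0 d r * starRingEnd ℂ (phi0 d r) := by
        rw [Finset.mul_sum]; apply Finset.sum_congr rfl; intro r _; ring
    _ = phi0 d p * starRingEnd ℂ (phi0 d q) := by rw [hsum, mul_one]

lemma aux_inv {n : Type} [Fintype n] [DecidableEq n] (P : Matrix n n ℂ)
    (hP : P * P = P) (c : ℂ) (hc : c ≠ 0) :
    (P + c⁻¹ • (1 - P)) * (P + c • (1 - P)) = 1 := by
  have h1 : P * (1 - P) = 0 := by rw [mul_sub, mul_one, hP, sub_self]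
  have h2 : (1 - P) * P = 0 := by rw [sub_mul, one_mul, hP, sub_self]
  have h3 : (1 - P) * (1 - P) = 1 - P := by rw [mul_sub, mul_one, h2, sub_zero]
  rw [add_mul, mul_add, mul_add, Matrix.smul_mul, Matrix.mul_smul, Matrix.mul_smul,
    Matrix.smul_mul, smul_smul, hP, h1, h2, h3, smul_zero, smul_zero, zero_add, add_zero,
    mul_inv_cancel₀ hc, one_smul, add_sub_cancel]

lemma Tinv_mul_inv (d : ℕ) (hd : 1 ≤ d) :
    Tinv d * (outer (phi0 d) + ((d : ℂ) + 1) • (1 - outer (phi0 d))) = 1 := by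
  have hc : ((d : ℂ) + 1) ≠ 0 := Nat.cast_add_one_ne_zero d
  have : Tinv d = outer (phi0 d) + ((d : ℂ) + 1)⁻¹ • (1 - outer (phi0 d)) := by
    rw [Tinv, one_div]
  rw [this]
  exact aux_inv _ (outer_idem d hd) _ hc

/-- Any family of weighted rank-one operators `p_i |u_i ⊗ ū_i⟩⟨u_i ⊗ ū_i|`
summing to `T_inv` has at least `d²` members. -/
theorem stmt4 (d : ℕ) (hd : 1 ≤ d) (ι : Type) [Fintype ι]
    (p : ι → ℝ) (hp : ∀ i, 0 < p i) (u : ι → V d) (hu : ∀ i, ‖u i‖ = 1)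
    (h : ∑ i, (p i : ℂ) • outer (tens (u i) (cvec (u i))) = Tinv d) :
    d ^ 2 ≤ Fintype.card ι := by
  set w : ι → V2 d := fun i => tens (u i) (cvec (u i)) with hw
  have hspan : Submodule.span ℂ (Set.range w) = ⊤ := by
    rw [Submodule.eq_top_iff']
    intro v
    set x : (Fin d × Fin d) → ℂ :=
      (outer (phi0 d) + ((d : ℂ) + 1) • (1 - outer (phi0 d))) *ᵥ v with hx
    have hv : (Tinv d) *ᵥ x = v := by
      rw [hx, Matrix.mulVec_mulVec, Tinv_mul_inv d hd, Matrix.one_mulVec]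
    rw [← WithLp.toLp_ofLp (p := 2) v, ← hv, ← h]
    have hsum : (∑ i, (p i : ℂ) • outer (w i)) *ᵥ x
        = ∑ i, ((p i : ℂ) • outer (w i)) *ᵥ x := by
      ext r
      simp only [Matrix.mulVec, dotProduct, Finset.sum_apply, Matrix.sum_apply,
        Finset.sum_mul]
      exact Finset.sum_comm
    rw [hsum, WithLp.toLp_sum]
    apply Submodule.sum_mem
    intro i _
    have houter : WithLp.toLp 2 (((p i : ℂ) • outer (w i)) *ᵥ x)
        = ((p i : ℂ) * ∑ q, starRingEnd ℂ (w i q) * x q) • w i := by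
      ext r
      simp only [PiLp.toLp_apply, Matrix.mulVec, dotProduct, Matrix.smul_apply, outer, Matrix.of_apply,
        smul_eq_mul, PiLp.smul_apply, Pi.smul_apply]
      rw [Finset.mul_sum, Finset.sum_mul]
      apply Finset.sum_congr rfl
      intro q _
      ring
    rw [houter]
    exact Submodule.smul_mem _ _ (Submodule.subset_span ⟨i, rfl⟩)
  have h1 : (Fintype.card ι : ℕ) ≥ Module.finrank ℂ (V2 d) := by
    calc Module.finrank ℂ (V2 d) = Module.finrank ℂ (⊤ : Submodule ℂ (V2 d)) :=
          (finrank_top ℂ (V2 d)).symm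
      _ = Module.finrank ℂ (Submodule.span ℂ (Set.range w)) := by rw [hspan]
      _ ≤ Fintype.card ι := finrank_range_le_card w
  have h2 : Module.finrank ℂ (V2 d) = d ^ 2 := by
    rw [finrank_euclideanSpace]
    simp [Fintype.card_prod, sq]
  omega
end
end

section
/- Let d ≥ 1 and suppose a SIC system exists on ℂ^d. Then the minimum cardinality of a finite index set I admitting positive reals p_i and unit vectors u_i ∈ ℂ^d (i ∈ I) with Σ_{i∈I} p_i·|u_i ⊗ ū_i⟩⟨u_i ⊗ ū_i| = T_inv is exactly d². -/
open scoped BigOperators ComplexInnerProductSpace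
open Matrix MeasureTheory

noncomputable section

namespace SICAux
variable {d : ℕ}

/-- inner product on V2 -/
def ip2 (a b : V2 d) : ℂ := ∑ p, (starRingEnd ℂ) (a p) * b p

/-- Hilbert-Schmidt pairing -/
def F (X Y : Op2 d) : ℂ := ∑ p, ∑ q, X p q * (starRingEnd ℂ) (Y p q)

lemma F_outer (a b : V2 d) : F (outer a) (outer b) = ip2 b a * ip2 a b := by
  unfold F outer ip2
  rw [Finset.sum_mul_sum]
  refine Finset.sum_congr rfl fun p _ => Finset.sum_congr rfl fun q _ => ?_
  simp only [Matrix.of_apply, _root_.map_mul, RingHomCompTriple.comp_apply,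
    starRingEnd_self_apply, RingHom.id_apply]
  ring

lemma F_one_right (X : Op2 d) : F X 1 = ∑ p, X p p := by
  unfold F
  refine Finset.sum_congr rfl fun p _ => ?_
  simp [Matrix.one_apply, apply_ite, mul_ite]

lemma F_one_left (Y : Op2 d) : F 1 Y = ∑ p, (starRingEnd ℂ) (Y p p) := by
  unfold F
  refine Finset.sum_congr rfl fun p _ => ?_
  simp [Matrix.one_apply, apply_ite, ite_mul]

lemma F_add_left (X X' Y : Op2 d) : F (X + X') Y = F X Y + F X' Y := by
  simp [F, add_mul, Finset.sum_add_distrib]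

lemma F_add_right (X Y Y' : Op2 d) : F X (Y + Y') = F X Y + F X Y' := by
  simp [F, mul_add, Finset.sum_add_distrib]

lemma F_smul_left (c : ℂ) (X Y : Op2 d) : F (c • X) Y = c * F X Y := by
  simp [F, Finset.mul_sum, mul_assoc]

lemma F_smul_right (c : ℂ) (X Y : Op2 d) : F X (c • Y) = (starRingEnd ℂ) c * F X Y := by
  simp [F, Finset.mul_sum]
  refine Finset.sum_congr rfl fun p _ => Finset.sum_congr rfl fun q _ => ?_
  ring

lemma F_sub_left (X X' Y : Op2 d) : F (X - X') Y = F X Y - F X' Y := by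
  simp [F, sub_mul, Finset.sum_sub_distrib]

lemma F_sub_right (X Y Y' : Op2 d) : F X (Y - Y') = F X Y - F X Y' := by
  simp [F, mul_sub, Finset.sum_sub_distrib]

lemma F_sum_left {ι : Type*} (s : Finset ι) (X : ι → Op2 d) (Y : Op2 d) :
    F (∑ i ∈ s, X i) Y = ∑ i ∈ s, F (X i) Y := by
  classical
  induction s using Finset.induction_on with
  | empty => simp [F]
  | insert a s h ih => rw [Finset.sum_insert h, F_add_left, ih, Finset.sum_insert h]

lemma F_sum_right {ι : Type*} (s : Finset ι) (X : Op2 d) (Y : ι → Op2 d) :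
    F X (∑ i ∈ s, Y i) = ∑ i ∈ s, F X (Y i) := by
  classical
  induction s using Finset.induction_on with
  | empty => simp [F]
  | insert a s h ih => rw [Finset.sum_insert h, F_add_right, ih, Finset.sum_insert h]

end SICAux
namespace SICAux
variable {d : ℕ}

lemma conj_conj' (z : ℂ) : (starRingEnd ℂ) ((starRingEnd ℂ) z) = z := Complex.conj_conj z

lemma inner_eq_sum (u v : V d) : (⟪u, v⟫ : ℂ) = ∑ k, (starRingEnd ℂ) (u k) * v k := by
  simp [PiLp.inner_apply, RCLike.inner_apply]
  exact Finset.sum_congr rfl fun _ _ => mul_comm _ _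

lemma sum_conj_mul_self {u : V d} (hu : ‖u‖ = 1) :
    ∑ k, (starRingEnd ℂ) (u k) * u k = 1 := by
  have h : (⟪u, u⟫ : ℂ) = 1 := by
    rw [inner_self_eq_norm_sq_to_K, hu]; norm_num
  rw [← inner_eq_sum, h]

lemma sum_mul_conj_self {u : V d} (hu : ‖u‖ = 1) :
    ∑ k, u k * (starRingEnd ℂ) (u k) = 1 := by
  have := sum_conj_mul_self hu
  rw [← this]
  exact Finset.sum_congr rfl fun k _ => mul_comm _ _

lemma ip2_tens (u v : V d) :
    ip2 (tens u (cvec u)) (tens v (cvec v)) =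
      (⟪u, v⟫ : ℂ) * (starRingEnd ℂ) (⟪u, v⟫ : ℂ) := by
  unfold ip2 tens cvec
  rw [Fintype.sum_prod_type, inner_eq_sum, map_sum, Finset.sum_mul_sum]
  refine Finset.sum_congr rfl fun k _ => Finset.sum_congr rfl fun l _ => ?_
  simp only [PiLp.toLp_apply, _root_.map_mul, conj_conj']
  ring

lemma ip2_tens_self {u : V d} (hu : ‖u‖ = 1) :
    ip2 (tens u (cvec u)) (tens u (cvec u)) = 1 := by
  rw [ip2_tens]
  have h : (⟪u, u⟫ : ℂ) = 1 := by
    rw [inner_self_eq_norm_sq_to_K, hu]; norm_num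
  rw [h]; simp

lemma ip2_tens_abs (u v : V d) :
    ip2 (tens u (cvec u)) (tens v (cvec v)) = ((‖(⟪u, v⟫ : ℂ)‖ ^ 2 : ℝ) : ℂ) := by
  rw [ip2_tens, Complex.mul_conj, Complex.sq_norm]

lemma ip2_phi0_self (hd : 1 ≤ d) : ip2 (phi0 d) (phi0 d) = 1 := by
  unfold ip2 phi0
  rw [Fintype.sum_prod_type]
  have hsd : (Real.sqrt d : ℂ)⁻¹ * (Real.sqrt d : ℂ)⁻¹ = ((d : ℂ))⁻¹ := by
    rw [← mul_inv, ← Complex.ofReal_mul, Real.mul_self_sqrt (Nat.cast_nonneg d)]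
    norm_num
  have hd0 : (d : ℂ) ≠ 0 := Nat.cast_ne_zero.mpr (by omega)
  simp only [PiLp.toLp_apply, apply_ite (starRingEnd ℂ), map_zero, map_inv₀, Complex.conj_ofReal]
  simp [Finset.sum_ite_eq, hsd, Finset.sum_const, mul_comm, hd0]

lemma ip2_phi0_tens {u : V d} (hu : ‖u‖ = 1) :
    ip2 (phi0 d) (tens u (cvec u)) = ((Real.sqrt d : ℂ))⁻¹ := by
  unfold ip2 phi0 tens cvec
  rw [Fintype.sum_prod_type]
  simp only [PiLp.toLp_apply, apply_ite (starRingEnd ℂ), map_zero, map_inv₀, Complex.conj_ofReal]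
  simp only [ite_mul, zero_mul, Finset.sum_ite_eq, Finset.mem_univ, if_true]
  rw [← Finset.mul_sum, sum_mul_conj_self hu, mul_one]

lemma ip2_tens_phi0 {u : V d} (hu : ‖u‖ = 1) :
    ip2 (tens u (cvec u)) (phi0 d) = ((Real.sqrt d : ℂ))⁻¹ := by
  unfold ip2 phi0 tens cvec
  rw [Fintype.sum_prod_type]
  simp only [PiLp.toLp_apply, _root_.map_mul, conj_conj', mul_ite, mul_zero, Finset.sum_ite_eq,
    Finset.mem_univ, if_true]
  have : ∀ k, (starRingEnd ℂ) (u k) * u k * (Real.sqrt d : ℂ)⁻¹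
      = (Real.sqrt d : ℂ)⁻¹ * ((starRingEnd ℂ) (u k) * u k) := fun k => by ring
  rw [Finset.sum_congr rfl fun k _ => this k, ← Finset.mul_sum, sum_conj_mul_self hu, mul_one]

end SICAux
namespace SICAux
variable {d : ℕ}

lemma ncast_add_one_ne (d : ℕ) : ((d : ℂ) + 1) ≠ 0 := by
  have h : ((d + 1 : ℕ) : ℂ) ≠ 0 := Nat.cast_ne_zero.mpr (Nat.succ_ne_zero d)
  push_cast at h; exact h

lemma F_outer_one (a : V2 d) : F (outer a) 1 = (starRingEnd ℂ) (ip2 a a) := by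
  rw [F_one_right]
  unfold outer ip2
  rw [map_sum]
  refine Finset.sum_congr rfl fun p _ => ?_
  simp only [Matrix.of_apply, _root_.map_mul, conj_conj']
  all_goals ring

lemma F_one_outer (a : V2 d) : F 1 (outer a) = ip2 a a := by
  rw [F_one_left]
  unfold outer ip2
  refine Finset.sum_congr rfl fun p _ => ?_
  simp only [Matrix.of_apply, _root_.map_mul, conj_conj']
  all_goals ring

lemma F_one_one : (F (1 : Op2 d) 1) = ((d : ℂ))^2 := by
  rw [F_one_right]
  simp [Matrix.one_apply, Finset.card_univ, pow_two]

lemma outer_mul_outer_self (hd : 1 ≤ d) :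
    outer (phi0 d) * outer (phi0 d) = outer (phi0 d) := by
  have key : ∑ r, (starRingEnd ℂ) (phi0 d r) * phi0 d r = 1 := ip2_phi0_self hd
  ext p q
  rw [Matrix.mul_apply]
  calc ∑ r, outer (phi0 d) p r * outer (phi0 d) r q
      = (phi0 d p * (starRingEnd ℂ) (phi0 d q)) *
          ∑ r, (starRingEnd ℂ) (phi0 d r) * phi0 d r := by
        rw [Finset.mul_sum]
        exact Finset.sum_congr rfl fun r _ => by
          simp only [outer, Matrix.of_apply]; ring
    _ = outer (phi0 d) p q := by rw [key, mul_one]; rfl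

lemma Tinv_eq (d : ℕ) :
    Tinv d = ((d : ℂ) + 1)⁻¹ • (1 : Op2 d) + ((d : ℂ) * ((d : ℂ) + 1)⁻¹) • outer (phi0 d) := by
  have ht : ((1 : ℂ) + d) ≠ 0 := by rw [add_comm]; exact ncast_add_one_ne d
  unfold Tinv
  rw [one_div]
  match_scalars
  · linear_combination -mul_inv_cancel₀ ht
  · ring

lemma Tinv_mul_inv (hd : 1 ≤ d) :
    Tinv d * (((d : ℂ) + 1) • (1 : Op2 d) - (d : ℂ) • outer (phi0 d)) = 1 := by
  have ht : ((d : ℂ) + 1) ≠ 0 := ncast_add_one_ne d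
  rw [Tinv_eq]
  simp only [add_mul, sub_mul, mul_sub, smul_mul_assoc, mul_smul_comm, one_mul, mul_one,
    outer_mul_outer_self hd]
  match_scalars
  · linear_combination mul_inv_cancel₀ ht
  · ring

end SICAux
namespace SICAux
variable {d : ℕ}

/-- a matrix with vanishing HS norm is zero -/
lemma eq_zero_of_F_self_eq_zero {X : Op2 d} (h : F X X = 0) : X = 0 := by
  have h1 : F X X = ((∑ p, ∑ q, Complex.normSq (X p q) : ℝ) : ℂ) := by
    unfold F
    push_cast
    exact Finset.sum_congr rfl fun p _ => Finset.sum_congr rfl fun q _ =>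
      (Complex.mul_conj (X p q))
  rw [h1] at h
  have h2 : (∑ p, ∑ q, Complex.normSq (X p q)) = 0 := by exact_mod_cast h
  ext p q
  have hnn : ∀ p ∈ Finset.univ, (0:ℝ) ≤ ∑ q, Complex.normSq (X p q) :=
    fun p _ => Finset.sum_nonneg fun q _ => Complex.normSq_nonneg _
  have h3 := (Finset.sum_eq_zero_iff_of_nonneg hnn).1 h2 p (Finset.mem_univ p)
  have h4 := (Finset.sum_eq_zero_iff_of_nonneg
    (fun q _ => Complex.normSq_nonneg (X p q))).1 h3 q (Finset.mem_univ q)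
  simpa using Complex.normSq_eq_zero.mp h4

lemma sqrtd_inv_mul (hd : 1 ≤ d) :
    ((Real.sqrt d : ℂ))⁻¹ * ((Real.sqrt d : ℂ))⁻¹ = ((d:ℂ))⁻¹ := by
  rw [← mul_inv, ← Complex.ofReal_mul, Real.mul_self_sqrt (Nat.cast_nonneg d)]
  norm_num

end SICAux
open SICAux in
/-- If a SIC system exists on `ℂ^d`, the minimal number of outcomes of a POVM
realizing `T_inv` is exactly `d²`. -/
theorem stmt5 (d : ℕ) (hd : 1 ≤ d) (usic : Fin (d ^ 2) → V d) (hsic : IsSIC usic) :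
    IsLeast {n : ℕ | ∃ (ι : Type) (_ : Fintype ι) (p : ι → ℝ) (u : ι → V d),
      Fintype.card ι = n ∧ (∀ i, 0 < p i) ∧ (∀ i, ‖u i‖ = 1) ∧
      ∑ i, (p i : ℂ) • outer (tens (u i) (cvec (u i))) = Tinv d} (d ^ 2) := by
  classical
  obtain ⟨hnorm, hoff⟩ := hsic
  have hn0 : ((d:ℂ)) ≠ 0 := Nat.cast_ne_zero.mpr (by omega)
  have ht0 : ((d:ℂ) + 1) ≠ 0 := ncast_add_one_ne d
  constructor
  · -- membership: SIC system realizes Tinv with d² outcomes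
    refine ⟨Fin (d ^ 2), inferInstance, fun _ => (d : ℝ)⁻¹, usic, Fintype.card_fin _,
      fun _ => inv_pos.mpr (by exact_mod_cast Nat.pos_of_ne_zero (by omega)), hnorm, ?_⟩
    set w : Fin (d ^ 2) → V2 d := fun i => tens (usic i) (cvec (usic i)) with hw
    have hc : ((((d:ℝ)⁻¹) : ℝ) : ℂ) = ((d:ℂ))⁻¹ := by push_cast; ring
    set S : Op2 d := ∑ i, ((((d:ℝ)⁻¹) : ℝ) : ℂ) • outer (w i) with hS
    show S = Tinv d
    have hconjc : (starRingEnd ℂ) (((((d:ℝ)⁻¹) : ℝ) : ℂ)) = ((((d:ℝ)⁻¹) : ℝ) : ℂ) :=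
      Complex.conj_ofReal _
    have hconj1 : (starRingEnd ℂ) (((d:ℂ)+1)⁻¹) = ((d:ℂ)+1)⁻¹ := by simp
    have hconj2 : (starRingEnd ℂ) ((d:ℂ)*((d:ℂ)+1)⁻¹) = (d:ℂ)*((d:ℂ)+1)⁻¹ := by simp
    have hT := Tinv_eq d
    -- expansions of F against S
    have hSleft : ∀ Y : Op2 d, F S Y = ∑ i, (d:ℂ)⁻¹ * F (outer (w i)) Y := by
      intro Y; rw [hS, F_sum_left]
      exact Finset.sum_congr rfl fun i _ => by rw [F_smul_left, hc]
    have hSright : ∀ X : Op2 d, F X S = ∑ i, (d:ℂ)⁻¹ * F X (outer (w i)) := by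
      intro X; rw [hS, F_sum_right]
      exact Finset.sum_congr rfl fun i _ => by rw [F_smul_right, hconjc, hc]
    -- atomic values
    have hgij : ∀ i j, F (outer (w i)) (outer (w j)) =
        if i = j then 1 else ((d:ℂ)+1)⁻¹ * ((d:ℂ)+1)⁻¹ := by
      intro i j
      rw [F_outer]
      by_cases h : i = j
      · subst h
        rw [if_pos rfl]
        simp only [hw]
        rw [ip2_tens_self (hnorm i), mul_one]
      · have key : ∀ a b : Fin (d^2), a ≠ b →
            ip2 (w a) (w b) = ((d:ℂ)+1)⁻¹ := by
          intro a b hab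
          simp only [hw]
          rw [ip2_tens_abs, hoff a b hab]
          push_cast
          rw [one_div]
        rw [if_neg h, key j i (Ne.symm h), key i j h]
    have hwP : ∀ i, F (outer (w i)) (outer (phi0 d)) = ((d:ℂ))⁻¹ := by
      intro i
      rw [F_outer]
      simp only [hw]
      rw [ip2_phi0_tens (hnorm i), ip2_tens_phi0 (hnorm i), sqrtd_inv_mul hd]
    have hPw : ∀ i, F (outer (phi0 d)) (outer (w i)) = ((d:ℂ))⁻¹ := by
      intro i
      rw [F_outer]
      simp only [hw]
      rw [ip2_phi0_tens (hnorm i), ip2_tens_phi0 (hnorm i), sqrtd_inv_mul hd]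
    have hPP2 : F (outer (phi0 d)) (outer (phi0 d)) = 1 := by
      rw [F_outer, ip2_phi0_self hd, mul_one]
    have hw1 : ∀ i, F (outer (w i)) 1 = 1 := by
      intro i
      rw [F_outer_one]
      simp only [hw]
      rw [ip2_tens_self (hnorm i), _root_.map_one]
    have h1w : ∀ i, F 1 (outer (w i)) = 1 := by
      intro i
      rw [F_one_outer]
      simp only [hw]
      rw [ip2_tens_self (hnorm i)]
    have hφ1 : F (outer (phi0 d)) 1 = 1 := by
      rw [F_outer_one, ip2_phi0_self hd, _root_.map_one]
    have h1φ : F 1 (outer (phi0 d)) = 1 := by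
      rw [F_one_outer, ip2_phi0_self hd]
    -- row sums
    have hd2 : 1 ≤ d ^ 2 := Nat.one_le_pow 2 d (by omega)
    have hrow : ∀ i : Fin (d^2),
        ∑ j, (if i = j then (1:ℂ) else ((d:ℂ)+1)⁻¹ * ((d:ℂ)+1)⁻¹)
          = 1 + ((d:ℂ)^2 - 1) * (((d:ℂ)+1)⁻¹ * ((d:ℂ)+1)⁻¹) := by
      intro i
      rw [← Finset.add_sum_erase Finset.univ _ (Finset.mem_univ i), if_pos rfl]
      congr 1
      rw [Finset.sum_congr rfl
          (fun j hj => if_neg (fun hh => (Finset.ne_of_mem_erase hj) hh.symm)),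
        Finset.sum_const, Finset.card_erase_of_mem (Finset.mem_univ i), Finset.card_univ,
        Fintype.card_fin, nsmul_eq_mul]
      congr 1
      push_cast [Nat.cast_sub hd2]
      ring
    -- the four Hilbert-Schmidt pairings
    have hFSS : F S S =
        (d:ℂ)^2 * ((d:ℂ)⁻¹ * ((d:ℂ)⁻¹ *
          (1 + ((d:ℂ)^2 - 1) * (((d:ℂ)+1)⁻¹ * ((d:ℂ)+1)⁻¹)))) := by
      rw [hSleft]
      have hstep : ∀ i, F (outer (w i)) S =
          (d:ℂ)⁻¹ * (1 + ((d:ℂ)^2 - 1) * (((d:ℂ)+1)⁻¹ * ((d:ℂ)+1)⁻¹)) := by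
        intro i
        rw [hSright]
        simp only [hgij]
        rw [← Finset.mul_sum, hrow]
      simp only [hstep]
      rw [Finset.sum_const, Finset.card_univ, Fintype.card_fin, nsmul_eq_mul]
      push_cast
      ring
    have hFST : F S (Tinv d) =
        (d:ℂ)^2 * ((d:ℂ)⁻¹ * (((d:ℂ)+1)⁻¹ + (d:ℂ)*((d:ℂ)+1)⁻¹*(d:ℂ)⁻¹)) := by
      rw [hSleft]
      have hstep : ∀ i, F (outer (w i)) (Tinv d) =
          ((d:ℂ)+1)⁻¹ + (d:ℂ)*((d:ℂ)+1)⁻¹*(d:ℂ)⁻¹ := by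
        intro i
        rw [hT, F_add_right, F_smul_right, F_smul_right, hw1 i, hwP i, hconj1, hconj2]
        ring
      simp only [hstep]
      rw [Finset.sum_const, Finset.card_univ, Fintype.card_fin, nsmul_eq_mul]
      push_cast
      ring
    have hFTS : F (Tinv d) S =
        (d:ℂ)^2 * ((d:ℂ)⁻¹ * (((d:ℂ)+1)⁻¹ + (d:ℂ)*((d:ℂ)+1)⁻¹*(d:ℂ)⁻¹)) := by
      rw [hT, F_add_left, F_smul_left, F_smul_left, hSright, hSright]
      simp only [h1w, hPw]
      rw [Finset.sum_const, Finset.sum_const, Finset.card_univ, Fintype.card_fin,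
        nsmul_eq_mul]
      push_cast
      ring
    have hFTT : F (Tinv d) (Tinv d) =
        ((d:ℂ)+1)⁻¹ * (((d:ℂ)+1)⁻¹ * (d:ℂ)^2)
          + ((d:ℂ)+1)⁻¹ * ((d:ℂ)*((d:ℂ)+1)⁻¹)
          + (d:ℂ)*((d:ℂ)+1)⁻¹ * ((d:ℂ)+1)⁻¹
          + ((d:ℂ)*((d:ℂ)+1)⁻¹) * ((d:ℂ)*((d:ℂ)+1)⁻¹) := by
      rw [hT]
      simp only [F_add_left, F_add_right, F_smul_left, F_smul_right, hconj1, hconj2,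
        F_one_one, h1φ, hφ1, hPP2]
      ring
    -- conclude
    have key : F (S - Tinv d) (S - Tinv d) = 0 := by
      rw [F_sub_left, F_sub_right, F_sub_right, hFSS, hFST, hFTS, hFTT]
      field_simp
      ring
    exact sub_eq_zero.mp (eq_zero_of_F_self_eq_zero key)
  · -- lower bound
    rintro n ⟨ι, _inst, p, u, hcard, hp, hu, hsum⟩
    set w : ι → V2 d := fun i => tens (u i) (cvec (u i)) with hw
    set W : Matrix (Fin d × Fin d) ι ℂ := Matrix.of (fun q i => w i q) with hW
    set B : Op2 d := ((d : ℂ) + 1) • (1 : Op2 d) - (d : ℂ) • outer (phi0 d) with hB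
    have hsurj : Function.Surjective W.mulVecLin := by
      intro y
      obtain ⟨x, h1⟩ : ∃ x, (Tinv d).mulVec x = y :=
        ⟨B.mulVec y, by rw [Matrix.mulVec_mulVec, Tinv_mul_inv hd, Matrix.one_mulVec]⟩
      refine ⟨fun i => (p i : ℂ) * ∑ q, (starRingEnd ℂ) (w i q) * x q, ?_⟩
      rw [Matrix.mulVecLin_apply]
      rw [← h1, ← hsum]
      funext r
      simp only [Matrix.mulVec, dotProduct, Matrix.sum_apply, Matrix.smul_apply,
        outer, Matrix.of_apply, smul_eq_mul, Finset.sum_mul, Finset.mul_sum]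
      rw [Finset.sum_comm]
      exact Finset.sum_congr rfl fun i _ => Finset.sum_congr rfl fun q _ => by
        simp only [hW, Matrix.of_apply, hw]; ring
    have hrank : W.rank = d ^ 2 := by
      rw [Matrix.rank, LinearMap.range_eq_top.mpr hsurj, finrank_top,
        Module.finrank_fintype_fun_eq_card, Fintype.card_prod, Fintype.card_fin, pow_two]
    calc d ^ 2 = W.rank := hrank.symm
      _ ≤ Fintype.card ι := W.rank_le_card_width
      _ = n := hcard
end
end
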